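/- Let (α, μ) be a measure space and n ≥ 1 a natural number. Let φ : α → [0,∞) and f : α → [0,∞) be measurable and assume 0 < ∫⁻ φ^{2n/(n+1)} dμ < ∞ and ∫⁻ fⁿ dμ < ∞. If equality holds in the Hölder-type inequality, i.e. (∫⁻ φ^{2n/(n+1)} dμ)^{(n+1)/n} = (∫⁻ φ²/f dμ) · (∫⁻ fⁿ dμ)^{1/n}, then there exists a constant c > 0 such that f = c·φ^{2/(n+1)} almost everywhere with respect to μ. -/

import Mathlib

open MeasureTheory ENNReal

/-- **Rigidity in the Hölder-type inequality**: if `0 < ∫⁻ φ^(2n/(n+1)) < ∞` and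
`∫⁻ fⁿ < ∞`, and if equality `(∫⁻ φ^(2n/(n+1)))^((n+1)/n) = (∫⁻ φ²/f) · (∫⁻ fⁿ)^(1/n)`
holds, then `f = c · φ^(2/(n+1))` almost everywhere for some constant `c > 0`. -/
private lemma amgm_eq_real {θ a b : ℝ} (hθ : 0 < θ) (hθ1 : θ < 1) (ha : 0 ≤ a) (hb : 0 ≤ b)
    (h : θ * a + (1 - θ) * b ≤ a ^ θ * b ^ (1 - θ)) : a = b := by
  by_contra hne
  have h1θ : 0 < 1 - θ := by linarith
  have hlt : a ^ θ * b ^ (1 - θ) < θ * a + (1 - θ) * b := by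
    rcases eq_or_lt_of_le ha with ha0 | ha0
    · have hb0 : 0 < b := lt_of_le_of_ne hb (by simpa [← ha0] using hne)
      rw [← ha0, Real.zero_rpow hθ.ne', zero_mul]
      nlinarith
    rcases eq_or_lt_of_le hb with hb0 | hb0
    · rw [← hb0, Real.zero_rpow h1θ.ne', mul_zero]
      nlinarith
    have key := strictConcaveOn_log_Ioi.2 (Set.mem_Ioi.2 ha0) (Set.mem_Ioi.2 hb0) hne hθ h1θ
      (by ring)
    simp only [smul_eq_mul] at key
    have e1 : a ^ θ * b ^ (1 - θ) = Real.exp (θ * Real.log a + (1 - θ) * Real.log b) := by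
      rw [Real.rpow_def_of_pos ha0, Real.rpow_def_of_pos hb0, ← Real.exp_add]
      ring_nf
    have hpos : 0 < θ * a + (1 - θ) * b := by nlinarith
    calc a ^ θ * b ^ (1 - θ) = Real.exp (θ * Real.log a + (1 - θ) * Real.log b) := e1
      _ < Real.exp (Real.log (θ * a + (1 - θ) * b)) := Real.exp_lt_exp.2 key
      _ = θ * a + (1 - θ) * b := Real.exp_log hpos
  exact absurd h hlt.not_ge

private lemma amgm_ennreal {θ : ℝ} (hθ : 0 < θ) (hθ1 : θ < 1) (a b : ℝ≥0∞) :
    a ^ θ * b ^ (1 - θ) ≤ ENNReal.ofReal θ * a + ENNReal.ofReal (1 - θ) * b := by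
  have h1θ : 0 < 1 - θ := by linarith
  rcases eq_or_ne a ⊤ with rfl | ha
  · have : ENNReal.ofReal θ * ⊤ = ⊤ := by
      simp [ENNReal.mul_top, (ENNReal.ofReal_pos.2 hθ).ne']
    simp [this]
  rcases eq_or_ne b ⊤ with rfl | hb
  · have : ENNReal.ofReal (1 - θ) * ⊤ = ⊤ := by
      simp [ENNReal.mul_top, (ENNReal.ofReal_pos.2 h1θ).ne']
    simp [this]
  lift a to NNReal using ha
  lift b to NNReal using hb
  rw [← ENNReal.coe_rpow_of_nonneg _ hθ.le, ← ENNReal.coe_rpow_of_nonneg _ h1θ.le,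
    ← ENNReal.coe_mul]
  rw [ENNReal.ofReal, ENNReal.ofReal, ← ENNReal.coe_mul, ← ENNReal.coe_mul, ← ENNReal.coe_add,
    ENNReal.coe_le_coe]
  have := NNReal.geom_mean_le_arith_mean2_weighted θ.toNNReal (1-θ).toNNReal a b ?_
  · convert this using 3 <;> simp [Real.coe_toNNReal _ hθ.le, Real.coe_toNNReal _ h1θ.le]
  · ext
    simp [Real.coe_toNNReal _ hθ.le, Real.coe_toNNReal _ h1θ.le]

private lemma amgm_eq_ennreal {θ : ℝ} (hθ : 0 < θ) (hθ1 : θ < 1) {a b : ℝ≥0∞}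
    (ha : a ≠ ⊤) (hb : b ≠ ⊤)
    (h : a ^ θ * b ^ (1 - θ) = ENNReal.ofReal θ * a + ENNReal.ofReal (1 - θ) * b) : a = b := by
  have h1θ : 0 < 1 - θ := by linarith
  have hre : a.toReal ^ θ * b.toReal ^ (1 - θ) = θ * a.toReal + (1 - θ) * b.toReal := by
    have := congrArg ENNReal.toReal h
    rwa [ENNReal.toReal_mul, ← ENNReal.toReal_rpow, ← ENNReal.toReal_rpow,
      ENNReal.toReal_add (by finiteness) (by finiteness), ENNReal.toReal_mul,
      ENNReal.toReal_mul, ENNReal.toReal_ofReal hθ.le, ENNReal.toReal_ofReal h1θ.le] at this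
  have := amgm_eq_real hθ hθ1 ENNReal.toReal_nonneg ENNReal.toReal_nonneg hre.ge
  exact (ENNReal.toReal_eq_toReal_iff' ha hb).1 this


theorem lintegral_holder_chiral_bag_eq_iff {α : Type*} [MeasurableSpace α] (μ : Measure α)
    (n : ℕ) (hn : 1 ≤ n) (φ : α → NNReal) (hφ : Measurable φ)
    (f : α → NNReal) (hf : Measurable f)
    (hpos : 0 < ∫⁻ x, (φ x : ℝ≥0∞) ^ ((2 * (n : ℝ)) / ((n : ℝ) + 1)) ∂μ)
    (hfin : (∫⁻ x, (φ x : ℝ≥0∞) ^ ((2 * (n : ℝ)) / ((n : ℝ) + 1)) ∂μ) < ∞)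
    (hffin : (∫⁻ x, (f x : ℝ≥0∞) ^ (n : ℝ) ∂μ) < ∞)
    (heq : (∫⁻ x, (φ x : ℝ≥0∞) ^ ((2 * (n : ℝ)) / ((n : ℝ) + 1)) ∂μ) ^
          (((n : ℝ) + 1) / (n : ℝ))
        = (∫⁻ x, (φ x : ℝ≥0∞) ^ (2 : ℝ) / (f x : ℝ≥0∞) ∂μ) *
          (∫⁻ x, (f x : ℝ≥0∞) ^ (n : ℝ) ∂μ) ^ (1 / (n : ℝ))) :
    ∃ c : NNReal, 0 < c ∧ ∀ᵐ x ∂μ, f x = c * φ x ^ ((2 : ℝ) / ((n : ℝ) + 1)) := by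
  have hnR : (0:ℝ) < (n:ℝ) := by exact_mod_cast hn
  have hn1 : (0:ℝ) < (n:ℝ) + 1 := by positivity
  set θ : ℝ := (n:ℝ) / ((n:ℝ) + 1) with hθdef
  have hθ : 0 < θ := by positivity
  have hθ1 : θ < 1 := by rw [hθdef, div_lt_one hn1]; linarith
  have h1θ : 1 - θ = 1 / ((n:ℝ)+1) := by rw [hθdef]; field_simp; ring
  have h1θpos : 0 < 1 - θ := by linarith
  set g : α → ℝ≥0∞ := fun x => (φ x : ℝ≥0∞) ^ (2:ℝ) / (f x : ℝ≥0∞) with hgdef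
  set h : α → ℝ≥0∞ := fun x => (f x : ℝ≥0∞) ^ (n:ℝ) with hhdef
  have hφE : Measurable fun x => (φ x : ℝ≥0∞) := hφ.coe_nnreal_ennreal
  have hfE : Measurable fun x => (f x : ℝ≥0∞) := hf.coe_nnreal_ennreal
  have hgm : Measurable g := (hφE.pow_const _).div hfE
  have hhm : Measurable h := hfE.pow_const _
  set A := ∫⁻ x, (φ x : ℝ≥0∞) ^ ((2 * (n : ℝ)) / ((n : ℝ) + 1)) ∂μ with hA
  set G := ∫⁻ x, g x ∂μ with hG
  set H := ∫⁻ x, h x ∂μ with hH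
  have hA0 : A ≠ 0 := hpos.ne'
  have hAt : A ≠ ⊤ := hfin.ne
  have hAe0 : A ^ (((n : ℝ) + 1) / (n : ℝ)) ≠ 0 := (ENNReal.rpow_pos hpos hAt).ne'
  have hAet : A ^ (((n : ℝ) + 1) / (n : ℝ)) ≠ ⊤ :=
    ENNReal.rpow_ne_top_of_nonneg (by positivity) hAt
  have hHt : H ≠ ⊤ := hffin.ne
  have hH0 : H ≠ 0 := by
    intro h0
    rw [h0, ENNReal.zero_rpow_of_pos (by positivity), mul_zero] at heq
    exact hAe0 heq
  have hG0 : G ≠ 0 := by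
    intro h0
    rw [h0, zero_mul] at heq
    exact hAe0 heq
  have hGt : G ≠ ⊤ := by
    intro h0
    rw [h0, ENNReal.top_mul (ENNReal.rpow_pos (hH0.bot_lt) hHt).ne'] at heq
    exact hAet heq
  -- equality A = G ^ θ * H ^ (1 - θ)
  have hAGH : A = G ^ θ * H ^ (1 - θ) := by
    have := congrArg (· ^ θ) heq
    simp only [← ENNReal.rpow_mul] at this
    rwa [show ((n : ℝ) + 1) / (n : ℝ) * θ = 1 by rw [hθdef]; field_simp,
      ENNReal.rpow_one, ENNReal.mul_rpow_of_nonneg _ _ hθ.le, ← ENNReal.rpow_mul,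
      show 1 / (n : ℝ) * θ = 1 - θ by rw [h1θ, hθdef]; field_simp] at this
  have hGθ0 : G ^ θ ≠ 0 := (ENNReal.rpow_pos hG0.bot_lt hGt).ne'
  have hGθt : G ^ θ ≠ ⊤ := ENNReal.rpow_ne_top_of_nonneg hθ.le hGt
  have hHθ0 : H ^ (1-θ) ≠ 0 := (ENNReal.rpow_pos hH0.bot_lt hHt).ne'
  have hHθt : H ^ (1-θ) ≠ ⊤ := ENNReal.rpow_ne_top_of_nonneg h1θpos.le hHt
  -- a.e. finiteness of g and vanishing of φ where f vanishes
  have hgfin : ∀ᵐ x ∂μ, g x < ⊤ := ae_lt_top hgm hGt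
  have hae0 : ∀ᵐ x ∂μ, f x = 0 → φ x = 0 := by
    filter_upwards [hgfin] with x hx hfx
    by_contra hφx
    apply hx.ne
    have hnum : (φ x : ℝ≥0∞) ^ (2:ℝ) ≠ 0 :=
      (ENNReal.rpow_pos (by simpa using pos_iff_ne_zero.2 hφx) ENNReal.coe_ne_top).ne'
    simp only [hgdef, hfx, ENNReal.coe_zero]
    exact ENNReal.div_zero hnum
  -- pointwise identity
  have hptwise : ∀ᵐ x ∂μ,
      (φ x : ℝ≥0∞) ^ ((2 * (n : ℝ)) / ((n : ℝ) + 1)) = g x ^ θ * h x ^ (1 - θ) := by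
    filter_upwards [hae0] with x hx
    by_cases hfx : f x = 0
    · have hφx := hx hfx
      simp only [hgdef, hhdef, hfx, hφx, ENNReal.coe_zero]
      rw [ENNReal.zero_rpow_of_pos (by positivity), ENNReal.zero_rpow_of_pos (by positivity),
        ENNReal.zero_div, ENNReal.zero_rpow_of_pos hθ, zero_mul]
    · have hfx0 : (f x : ℝ≥0∞) ≠ 0 := by simpa using hfx
      have hfxt : (f x : ℝ≥0∞) ≠ ⊤ := ENNReal.coe_ne_top
      have hfθ0 : (f x : ℝ≥0∞) ^ θ ≠ 0 := (ENNReal.rpow_pos hfx0.bot_lt hfxt).ne'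
      have hfθt : (f x : ℝ≥0∞) ^ θ ≠ ⊤ := ENNReal.rpow_ne_top_of_nonneg hθ.le hfxt
      simp only [hgdef, hhdef]
      rw [ENNReal.div_rpow_of_nonneg _ _ hθ.le, ← ENNReal.rpow_mul, ← ENNReal.rpow_mul,
        show (n:ℝ) * (1 - θ) = θ by rw [hθdef]; field_simp; ring,
        ENNReal.div_mul_cancel hfθ0 hfθt,
        show (2:ℝ) * θ = 2 * (n:ℝ) / ((n:ℝ)+1) by rw [hθdef]; ring]
  have hintA : ∫⁻ x, g x ^ θ * h x ^ (1 - θ) ∂μ = A := by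
    rw [hA]
    exact (lintegral_congr_ae hptwise).symm
  -- normalized functions
  set g' : α → ℝ≥0∞ := fun x => g x * G⁻¹ with hg'def
  set h' : α → ℝ≥0∞ := fun x => h x * H⁻¹ with hh'def
  have hg'm : Measurable g' := hgm.mul_const _
  have hh'm : Measurable h' := hhm.mul_const _
  have hintg' : ∫⁻ x, g' x ∂μ = 1 := by
    rw [hg'def]
    simp only []
    rw [lintegral_mul_const _ hgm, ← hG]
    exact ENNReal.mul_inv_cancel hG0 hGt
  have hinth' : ∫⁻ x, h' x ∂μ = 1 := by
    rw [hh'def]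
    simp only []
    rw [lintegral_mul_const _ hhm, ← hH]
    exact ENNReal.mul_inv_cancel hH0 hHt
  have hprodpt : ∀ x, g' x ^ θ * h' x ^ (1 - θ) = g x ^ θ * h x ^ (1 - θ) * A⁻¹ := by
    intro x
    rw [hg'def, hh'def]
    simp only []
    rw [ENNReal.mul_rpow_of_nonneg _ _ hθ.le, ENNReal.mul_rpow_of_nonneg _ _ h1θpos.le,
      ENNReal.inv_rpow, ENNReal.inv_rpow, hAGH, ENNReal.mul_inv (Or.inl hGθ0) (Or.inl hGθt)]
    ring
  have hint1 : ∫⁻ x, g' x ^ θ * h' x ^ (1 - θ) ∂μ = 1 := by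
    simp only [hprodpt]
    rw [lintegral_mul_const (f := fun x => g x ^ θ * h x ^ (1 - θ)) _
        ((hgm.pow_const θ).mul (hhm.pow_const (1 - θ))), hintA,
      ENNReal.mul_inv_cancel hA0 hAt]
  have hint2 : ∫⁻ x, (ENNReal.ofReal θ * g' x + ENNReal.ofReal (1 - θ) * h' x) ∂μ = 1 := by
    rw [lintegral_add_left (hg'm.const_mul _), lintegral_const_mul _ hg'm,
      lintegral_const_mul _ hh'm, hintg', hinth', mul_one, mul_one,
      ← ENNReal.ofReal_add hθ.le h1θpos.le]
    norm_num
  have heqae : (fun x => g' x ^ θ * h' x ^ (1 - θ)) =ᵐ[μ]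
      fun x => ENNReal.ofReal θ * g' x + ENNReal.ofReal (1 - θ) * h' x := by
    refine ae_eq_of_ae_le_of_lintegral_le (ae_of_all _ fun x => amgm_ennreal hθ hθ1 _ _)
      (by rw [hint1]; exact ENNReal.one_ne_top)
      ((hg'm.const_mul _).add (hh'm.const_mul _)).aemeasurable ?_
    rw [hint1, hint2]
  have hg'h' : ∀ᵐ x ∂μ, g' x = h' x := by
    filter_upwards [heqae, hgfin] with x hx hgx
    have hg't : g' x ≠ ⊤ := by
      rw [hg'def]
      exact ENNReal.mul_ne_top hgx.ne (ENNReal.inv_ne_top.2 hG0)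
    have hh't : h' x ≠ ⊤ := by
      rw [hh'def]
      exact ENNReal.mul_ne_top (ENNReal.rpow_ne_top_of_nonneg hnR.le ENNReal.coe_ne_top)
        (ENNReal.inv_ne_top.2 hH0)
    exact amgm_eq_ennreal hθ hθ1 hg't hh't hx
  -- recover g = k * h
  set k : ℝ≥0∞ := G * H⁻¹ with hkdef
  have hk0 : k ≠ 0 := by
    rw [hkdef]
    exact mul_ne_zero hG0 (ENNReal.inv_ne_zero.2 hHt)
  have hkt : k ≠ ⊤ := ENNReal.mul_ne_top hGt (ENNReal.inv_ne_top.2 hH0)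
  have hgkh : ∀ᵐ x ∂μ, g x = k * h x := by
    filter_upwards [hg'h'] with x hx
    have hx' : g x * G⁻¹ = h x * H⁻¹ := hx
    calc g x = g x * G⁻¹ * G := by rw [mul_assoc, ENNReal.inv_mul_cancel hG0 hGt, mul_one]
      _ = h x * H⁻¹ * G := by rw [hx']
      _ = k * h x := by rw [hkdef]; ring
  set cE : ℝ≥0∞ := k⁻¹ ^ ((1:ℝ)/((n:ℝ)+1)) with hcEdef
  have hcE0 : cE ≠ 0 :=
    (ENNReal.rpow_pos (pos_iff_ne_zero.2 (ENNReal.inv_ne_zero.2 hkt))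
      (ENNReal.inv_ne_top.2 hk0)).ne'
  have hcEt : cE ≠ ⊤ :=
    ENNReal.rpow_ne_top_of_nonneg (by positivity) (ENNReal.inv_ne_top.2 hk0)
  refine ⟨cE.toNNReal, ENNReal.toNNReal_pos hcE0 hcEt, ?_⟩
  filter_upwards [hgkh, hae0] with x hx hx0
  have key : (f x : ℝ≥0∞) = cE * (φ x : ℝ≥0∞) ^ ((2:ℝ)/((n:ℝ)+1)) := by
    by_cases hfx : f x = 0
    · have hφx := hx0 hfx
      rw [hfx, hφx]
      simp [ENNReal.zero_rpow_of_pos (show (0:ℝ) < 2/((n:ℝ)+1) by positivity)]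
    · have hfx0 : (f x : ℝ≥0∞) ≠ 0 := by simpa using hfx
      have hfxt : (f x : ℝ≥0∞) ≠ ⊤ := ENNReal.coe_ne_top
      have h2 : (φ x : ℝ≥0∞) ^ (2:ℝ) = k * (f x : ℝ≥0∞) ^ ((n:ℝ)+1) := by
        have hxm := congrArg (· * (f x : ℝ≥0∞)) hx
        simp only [hgdef, hhdef] at hxm
        rw [ENNReal.div_mul_cancel hfx0 hfxt] at hxm
        rw [hxm, mul_assoc]
        congr 1
        calc (f x : ℝ≥0∞) ^ (n:ℝ) * (f x : ℝ≥0∞)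
            = (f x : ℝ≥0∞) ^ (n:ℝ) * (f x : ℝ≥0∞) ^ (1:ℝ) := by rw [ENNReal.rpow_one]
          _ = (f x : ℝ≥0∞) ^ ((n:ℝ)+1) := (ENNReal.rpow_add _ _ hfx0 hfxt).symm
      have h3 : (f x : ℝ≥0∞) ^ ((n:ℝ)+1) = k⁻¹ * (φ x : ℝ≥0∞) ^ (2:ℝ) := by
        rw [h2, ← mul_assoc, ENNReal.inv_mul_cancel hk0 hkt, one_mul]
      have h4 := congrArg (· ^ ((1:ℝ)/((n:ℝ)+1))) h3
      rwa [← ENNReal.rpow_mul, show ((n:ℝ)+1) * (1/((n:ℝ)+1)) = 1 by field_simp,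
        ENNReal.rpow_one, ENNReal.mul_rpow_of_nonneg _ _ (by positivity : (0:ℝ) ≤ 1/((n:ℝ)+1)),
        ← ENNReal.rpow_mul, show (2:ℝ) * (1/((n:ℝ)+1)) = 2/((n:ℝ)+1) by ring] at h4
  exact ENNReal.coe_inj.1 (by
    rw [ENNReal.coe_mul, ENNReal.coe_rpow_of_nonneg _ (by positivity : (0:ℝ) ≤ 2/((n:ℝ)+1)),
      ENNReal.coe_toNNReal hcEt]
    exact key)
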